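/- arXiv:2211.02395 — 2 statements merged into one kernel-verified Lean document; each statement's English description precedes it below -/
import Mathlib

section
/- Let n be an even positive integer and let G_n = P_n + K₁ be the graph obtained from the path on n vertices by adding a universal vertex. Then DOM(G_n) = n/2 + 1. -/
open SimpleGraph

variable {V : Type*}

/-- `D` is an orientation of the simple graph `G`: arcs only along edges, and each edge
gets exactly one of its two possible directions. -/
def IsOrientation (G : SimpleGraph V) (D : V → V → Prop) : Prop :=
  (∀ u v, D u v → G.Adj u v) ∧ (∀ u v, G.Adj u v → (D u v ↔ ¬ D v u))

/-- `S` is a dominating set of the digraph `D`. -/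
def IsDomSet (D : V → V → Prop) (S : Finset V) : Prop :=
  ∀ v, v ∉ S → ∃ u ∈ S, D u v

/-- Domination number of a digraph. -/
noncomputable def domNum (D : V → V → Prop) : ℕ :=
  sInf {n | ∃ S : Finset V, S.card = n ∧ IsDomSet D S}

/-- Orientable domination number of a graph. -/
noncomputable def DOM (G : SimpleGraph V) : ℕ :=
  sSup {n | ∃ D : V → V → Prop, IsOrientation G D ∧ domNum D = n}

/-- Independence number. -/
noncomputable def indepNum (G : SimpleGraph V) : ℕ :=
  sSup {n | ∃ S : Finset V, S.card = n ∧ ∀ u ∈ S, ∀ v ∈ S, ¬ G.Adj u v}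

/-- Matching number. -/
noncomputable def matchNum (G : SimpleGraph V) : ℕ :=
  sSup {n | ∃ M : Finset (Sym2 V), M.card = n ∧ (∀ e ∈ M, e ∈ G.edgeSet) ∧
    ∀ e ∈ M, ∀ f ∈ M, e ≠ f → ∀ v, v ∈ e → v ∉ f}

/-- Maximum order of a bipartite induced subgraph. -/
noncomputable def bipNum (G : SimpleGraph V) : ℕ :=
  sSup {n | ∃ s : Finset V, s.card = n ∧ (G.induce (s : Set V)).Colorable 2}

/-- Join of `G` with a single universal vertex (`none`). -/
def joinK1 (G : SimpleGraph V) : SimpleGraph (Option V) :=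
  SimpleGraph.fromRel (fun a b => a = none ∨ ∃ u v, a = some u ∧ b = some v ∧ G.Adj u v)

/-- Lexicographic product `G ∘ H`. -/
def lexProd {W : Type*} (G : SimpleGraph V) (H : SimpleGraph W) : SimpleGraph (V × W) :=
  SimpleGraph.fromRel (fun a b => G.Adj a.1 b.1 ∨ (a.1 = b.1 ∧ H.Adj a.2 b.2))

/-- Corona `G ⊙ H`: vertex `(u, none)` is the vertex `u` of `G`, the vertices `(u, some w)`
form the copy of `H` joined to `u`. -/
def corona {W : Type*} (G : SimpleGraph V) (H : SimpleGraph W) : SimpleGraph (V × Option W) :=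
  SimpleGraph.fromRel (fun a b =>
    (a.2 = none ∧ b.2 = none ∧ G.Adj a.1 b.1) ∨
    (a.1 = b.1 ∧ ∃ w w', a.2 = some w ∧ b.2 = some w' ∧ H.Adj w w') ∨
    (a.1 = b.1 ∧ a.2 = none ∧ b.2 ≠ none))

/-- A digraph is acyclic if it has no directed cycle. -/
def DigraphAcyclic (D : V → V → Prop) : Prop :=
  ¬ ∃ (m : ℕ) (c : ℕ → V), 0 < m ∧ (∀ i < m, D (c i) (c (i + 1))) ∧ c m = c 0

/-- A packing of a digraph: no arc joins two of its vertices and no vertex has two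
out-neighbors in it. -/
def IsPacking (D : V → V → Prop) (P : Finset V) : Prop :=
  (∀ u ∈ P, ∀ v ∈ P, ¬ D u v) ∧
  (∀ u ∈ P, ∀ v ∈ P, u ≠ v → ∀ w, ¬ (D w u ∧ D w v))

/-- Packing number of a digraph. -/
noncomputable def packNum (D : V → V → Prop) : ℕ :=
  sSup {n | ∃ P : Finset V, P.card = n ∧ IsPacking D P}

section OrientDomAux

lemma joinK1_path_adj_some_some {n : ℕ} {i j : Fin n} :
    (joinK1 (pathGraph n)).Adj (some i) (some j) ↔ (i.val + 1 = j.val ∨ j.val + 1 = i.val) := by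
  simp only [joinK1, fromRel_adj, pathGraph_adj, Fin.ext_iff]
  constructor
  · rintro ⟨hne, (h | h) | (h | h)⟩
    · simp at h
    · obtain ⟨u, v, hu, hv, h⟩ := h
      simp only [Option.some.injEq, Fin.ext_iff] at hu hv
      omega
    · simp at h
    · obtain ⟨u, v, hu, hv, h⟩ := h
      simp only [Option.some.injEq, Fin.ext_iff] at hu hv
      omega
  · intro h
    refine ⟨by simp [Fin.ext_iff]; omega, Or.inl (Or.inr ⟨i, j, rfl, rfl, h⟩)⟩

lemma joinK1_path_adj_none_some {n : ℕ} {i : Fin n} :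
    (joinK1 (pathGraph n)).Adj none (some i) := by
  simp [joinK1]

lemma domNum_le_card {V : Type*} {D : V → V → Prop} {S : Finset V} (h : IsDomSet D S) :
    domNum D ≤ S.card :=
  Nat.sInf_le ⟨S, rfl, h⟩

lemma domNum_upper (n : ℕ) (he : Even n) (D : Option (Fin n) → Option (Fin n) → Prop)
    (hD : IsOrientation (joinK1 (pathGraph n)) D) : domNum D ≤ n / 2 + 1 := by
  classical
  obtain ⟨m0, hm0⟩ := he
  set g : ℕ → Option (Fin n) := fun i =>
    if h : 2 * i + 1 < n then
      (if D (some ⟨2 * i, by omega⟩) (some ⟨2 * i + 1, h⟩) then some ⟨2 * i, by omega⟩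
       else some ⟨2 * i + 1, h⟩)
    else none with hg
  set S : Finset (Option (Fin n)) := insert none ((Finset.range (n / 2)).image g) with hSdef
  have hdom : IsDomSet D S := by
    intro v hv
    match v with
    | none => exact absurd (Finset.mem_insert_self _ _) hv
    | some w =>
      have hw : w.val < n := w.isLt
      obtain ⟨k, hk⟩ : ∃ k : ℕ, w.val / 2 = k := ⟨_, rfl⟩
      have h2 : 2 * k + 1 < n := by omega
      have hkr : k ∈ Finset.range (n / 2) := by rw [Finset.mem_range]; omega
      have hgk : g k ∈ S := Finset.mem_insert_of_mem (Finset.mem_image_of_mem g hkr)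
      have hgkeq : g k = if D (some ⟨2 * k, by omega⟩) (some ⟨2 * k + 1, h2⟩)
          then some ⟨2 * k, by omega⟩ else some ⟨2 * k + 1, h2⟩ := by
        rw [hg]; simp only [dif_pos h2]
      by_cases hd : D (some ⟨2 * k, by omega⟩) (some ⟨2 * k + 1, h2⟩)
      · rw [if_pos hd] at hgkeq
        have hne : w.val ≠ 2 * k := by
          intro hEq
          apply hv
          have hww : (⟨2 * k, by omega⟩ : Fin n) = w := Fin.ext hEq.symm
          rw [hgkeq, hww] at hgk
          exact hgk
        have hwb : w = (⟨2 * k + 1, h2⟩ : Fin n) := Fin.ext (show w.val = 2 * k + 1 by omega)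
        refine ⟨some ⟨2 * k, by omega⟩, ?_, ?_⟩
        · rw [hgkeq] at hgk; exact hgk
        · rw [hwb]; exact hd
      · rw [if_neg hd] at hgkeq
        have hne : w.val ≠ 2 * k + 1 := by
          intro hEq
          apply hv
          have hww : (⟨2 * k + 1, h2⟩ : Fin n) = w := Fin.ext hEq.symm
          rw [hgkeq, hww] at hgk
          exact hgk
        have hwb : w = (⟨2 * k, by omega⟩ : Fin n) := Fin.ext (show w.val = 2 * k by omega)
        have hadj : (joinK1 (pathGraph n)).Adj (some ⟨2 * k, by omega⟩) (some ⟨2 * k + 1, h2⟩) :=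
          joinK1_path_adj_some_some.mpr (Or.inl rfl)
        have hrev : D (some ⟨2 * k + 1, h2⟩) (some ⟨2 * k, by omega⟩) := by
          by_contra hY
          exact hd ((hD.2 _ _ hadj).mpr hY)
        refine ⟨some ⟨2 * k + 1, h2⟩, ?_, ?_⟩
        · rw [hgkeq] at hgk; exact hgk
        · rw [hwb]; exact hrev
  calc domNum D ≤ S.card := domNum_le_card hdom
    _ ≤ ((Finset.range (n / 2)).image g).card + 1 := Finset.card_insert_le _ _
    _ ≤ (Finset.range (n / 2)).card + 1 := by
        exact Nat.add_le_add_right Finset.card_image_le 1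
    _ = n / 2 + 1 := by rw [Finset.card_range]

/-- The specific orientation achieving the bound. -/
def D0 (n : ℕ) : Option (Fin n) → Option (Fin n) → Prop
  | some i, some j => i.val + 1 = j.val
  | none, some i => i.val % 2 = 0
  | some i, none => i.val % 2 = 1
  | none, none => False

lemma D0_orientation (n : ℕ) : IsOrientation (joinK1 (pathGraph n)) (D0 n) := by
  constructor
  · rintro (_ | i) (_ | j) h
    · exact absurd h (by simp [D0])
    · exact joinK1_path_adj_none_some
    · exact joinK1_path_adj_none_some.symm
    · exact joinK1_path_adj_some_some.mpr (Or.inl h)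
  · rintro (_ | i) (_ | j) hadj
    · exact absurd hadj (joinK1 (pathGraph n)).irrefl
    · show j.val % 2 = 0 ↔ ¬ (j.val % 2 = 1)
      omega
    · show i.val % 2 = 1 ↔ ¬ (i.val % 2 = 0)
      omega
    · have h := joinK1_path_adj_some_some.mp hadj
      show i.val + 1 = j.val ↔ ¬ (j.val + 1 = i.val)
      omega

lemma D0_card_lower (n : ℕ) (hn : 0 < n) (he : Even n) (S : Finset (Option (Fin n)))
    (hS : IsDomSet (D0 n) S) : n / 2 + 1 ≤ S.card := by
  classical
  by_contra hlt
  push_neg at hlt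
  have hcard : S.card ≤ n / 2 := by omega
  obtain ⟨m0, hm0⟩ := he
  set f : Option (Fin n) → ℕ := fun v => match v with | some w => w.val / 2 | none => n with hf
  set T : Finset (Option (Fin n)) := S.filter (fun v => v ≠ none) with hT
  have hpair : ∀ k, k < n / 2 → ∃ w : Fin n, some w ∈ S ∧ w.val / 2 = k := by
    intro k hk
    have h2 : 2 * k + 1 < n := by omega
    by_cases hbS : some (⟨2 * k + 1, h2⟩ : Fin n) ∈ S
    · exact ⟨_, hbS, by simp; omega⟩
    · obtain ⟨u, huS, hu⟩ := hS _ hbS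
      match u with
      | none =>
        have : (2 * k + 1) % 2 = 0 := hu
        omega
      | some j =>
        refine ⟨j, huS, ?_⟩
        have : j.val + 1 = 2 * k + 1 := hu
        omega
  have hsub : Finset.range (n / 2) ⊆ T.image f := by
    intro k hk
    rw [Finset.mem_range] at hk
    obtain ⟨w, hwS, hwk⟩ := hpair k hk
    rw [Finset.mem_image]
    refine ⟨some w, ?_, ?_⟩
    · rw [hT, Finset.mem_filter]; exact ⟨hwS, by simp⟩
    · simp [hf, hwk]
  have h1 : n / 2 ≤ (T.image f).card := by
    calc n / 2 = (Finset.range (n / 2)).card := (Finset.card_range _).symm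
      _ ≤ (T.image f).card := Finset.card_le_card hsub
  have h2 : (T.image f).card ≤ T.card := Finset.card_image_le
  have h3 : T.card ≤ S.card := Finset.card_filter_le _ _
  have hTS : T = S := Finset.eq_of_subset_of_card_le (Finset.filter_subset _ _) (by omega)
  have hnone : none ∉ S := by
    intro h
    have hmem : (none : Option (Fin n)) ∈ T := by rw [hTS]; exact h
    rw [hT, Finset.mem_filter] at hmem
    exact hmem.2 rfl
  have hinj : Set.InjOn f ↑T := Finset.injOn_of_card_image_eq (by omega)
  have heven : ∀ k, ∀ hk : 2 * k < n, some (⟨2 * k, hk⟩ : Fin n) ∈ S := by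
    intro k
    induction k with
    | zero =>
      intro hk
      by_contra hx
      obtain ⟨u, huS, hu⟩ := hS _ hx
      match u with
      | none => exact hnone huS
      | some j =>
        have : j.val + 1 = 2 * 0 := hu
        omega
    | succ k ih =>
      intro hk
      by_contra hx
      obtain ⟨u, huS, hu⟩ := hS _ hx
      match u with
      | none => exact hnone huS
      | some j =>
        have hj : j.val + 1 = 2 * (k + 1) := hu
        have hk' : 2 * k < n := by omega
        have hkS : some (⟨2 * k, hk'⟩ : Fin n) ∈ S := ih hk'
        have hjT : some j ∈ T := by
          rw [hTS]; exact huS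
        have hkT : some (⟨2 * k, hk'⟩ : Fin n) ∈ T := by
          rw [hTS]; exact hkS
        have heq := hinj (Finset.mem_coe.mpr hkT) (Finset.mem_coe.mpr hjT)
          (show (2 * k : ℕ) / 2 = j.val / 2 by omega)
        simp only [Option.some.injEq, Fin.ext_iff] at heq
        omega
  obtain ⟨u, huS, hu⟩ := hS none hnone
  match u with
  | none => exact hnone huS
  | some j =>
    have hj : j.val % 2 = 1 := hu
    have hql : 2 * (j.val / 2) < n := by have := j.isLt; omega
    have hq : some (⟨2 * (j.val / 2), hql⟩ : Fin n) ∈ S := heven _ hql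
    have h1T : some j ∈ T := by rw [hTS]; exact huS
    have h2T : some (⟨2 * (j.val / 2), hql⟩ : Fin n) ∈ T := by rw [hTS]; exact hq
    have heq := hinj (Finset.mem_coe.mpr h2T) (Finset.mem_coe.mpr h1T)
      (show 2 * (j.val / 2) / 2 = j.val / 2 by omega)
    simp only [Option.some.injEq, Fin.ext_iff] at heq
    omega

lemma domNum_D0 (n : ℕ) (hn : 0 < n) (he : Even n) : domNum (D0 n) = n / 2 + 1 := by
  refine le_antisymm (domNum_upper n he _ (D0_orientation n)) ?_
  refine le_csInf ⟨(Finset.univ : Finset (Option (Fin n))).card,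
    Finset.univ, rfl, fun v hv => absurd (Finset.mem_univ v) hv⟩ ?_
  rintro m ⟨S, rfl, hS⟩
  exact D0_card_lower n hn he S hS

end OrientDomAux

theorem stmt7 (n : ℕ) (hn : 0 < n) (heven : Even n) :
    DOM (joinK1 (pathGraph n)) = n / 2 + 1 := by
  have hmem : (n / 2 + 1) ∈ {m | ∃ D : Option (Fin n) → Option (Fin n) → Prop,
      IsOrientation (joinK1 (pathGraph n)) D ∧ domNum D = m} :=
    ⟨D0 n, D0_orientation n, domNum_D0 n hn heven⟩
  have hub : ∀ m ∈ {m | ∃ D : Option (Fin n) → Option (Fin n) → Prop,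
      IsOrientation (joinK1 (pathGraph n)) D ∧ domNum D = m}, m ≤ n / 2 + 1 := by
    rintro m ⟨D, hD, rfl⟩
    exact domNum_upper n heven D hD
  exact le_antisymm (csSup_le ⟨_, hmem⟩ hub) (le_csSup ⟨_, hub⟩ hmem)
end

section
/- If G and H are graphs with DOM(H + K₁) = DOM(H), then DOM(G ⊙ H) = DOM(H)·n(G), where G ⊙ H is the corona of G and H. -/
open SimpleGraph

variable {V : Type*}

section Aux
variable {V : Type*}

lemma isDomSet_univ [Fintype V] (D : V → V → Prop) : IsDomSet D Finset.univ :=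
  fun v hv => absurd (Finset.mem_univ v) hv

lemma domNum_le {D : V → V → Prop} {S : Finset V} (hS : IsDomSet D S) :
    domNum D ≤ S.card := Nat.sInf_le ⟨S, rfl, hS⟩

lemma exists_domSet [Fintype V] (D : V → V → Prop) :
    ∃ S : Finset V, S.card = domNum D ∧ IsDomSet D S :=
  Nat.sInf_mem (s := {n | ∃ S : Finset V, S.card = n ∧ IsDomSet D S})
    ⟨Finset.univ.card, Finset.univ, rfl, isDomSet_univ D⟩

lemma domNum_le_card_s8 [Fintype V] (D : V → V → Prop) :
    domNum D ≤ Fintype.card V := by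
  simpa using domNum_le (isDomSet_univ D)

lemma exists_orientation (G : SimpleGraph V) : ∃ D, IsOrientation G D := by
  refine ⟨fun u v => G.Adj u v ∧ WellOrderingRel u v, fun u v h => h.1, fun u v h => ?_⟩
  have hne : u ≠ v := h.ne
  rcases trichotomous_of WellOrderingRel u v with h1 | h1 | h1
  · simp only [h, h.symm, true_and]
    simp [h1]; exact asymm h1
  · exact absurd h1 hne
  · simp only [h, h.symm, true_and]
    simp [asymm h1, h1]

lemma domNum_le_DOM [Fintype V] {G : SimpleGraph V} {D : V → V → Prop}
    (hD : IsOrientation G D) : domNum D ≤ DOM G :=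
  le_csSup ⟨Fintype.card V, fun n ⟨D', _, hD'⟩ => hD' ▸ domNum_le_card_s8 D'⟩ ⟨D, hD, rfl⟩

lemma DOM_le [Fintype V] {G : SimpleGraph V} {n : ℕ}
    (h : ∀ D, IsOrientation G D → domNum D ≤ n) : DOM G ≤ n :=
  csSup_le' (fun m ⟨D, hD, hm⟩ => hm ▸ h D hD)

lemma exists_DOM_orientation [Fintype V] (G : SimpleGraph V) :
    ∃ D, IsOrientation G D ∧ domNum D = DOM G := by
  obtain ⟨D, hD⟩ := exists_orientation G
  have := Nat.sSup_mem (s := {n | ∃ D, IsOrientation G D ∧ domNum D = n})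
    ⟨domNum D, D, hD, rfl⟩
    ⟨Fintype.card V, fun n ⟨D', _, hD'⟩ => hD' ▸ domNum_le_card_s8 D'⟩
  exact this

end Aux

section Char
variable {V W : Type*} {G : SimpleGraph V} {H : SimpleGraph W}

lemma joinK1_adj {a b : Option W} : (joinK1 H).Adj a b ↔
    (a = none ∧ b ≠ none) ∨ (b = none ∧ a ≠ none) ∨
    ∃ w w', a = some w ∧ b = some w' ∧ H.Adj w w' := by
  simp only [joinK1, SimpleGraph.fromRel_adj]
  rcases a with _ | w <;> rcases b with _ | w' <;>
    simp_all [H.adj_comm] <;> first | tauto | aesop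

lemma corona_adj {x y : V × Option W} : (corona G H).Adj x y ↔
    (x.1 ≠ y.1 ∧ x.2 = none ∧ y.2 = none ∧ G.Adj x.1 y.1) ∨
    (x.1 = y.1 ∧ ∃ w w', x.2 = some w ∧ y.2 = some w' ∧ H.Adj w w') ∨
    (x.1 = y.1 ∧ x.2 = none ∧ y.2 ≠ none) ∨
    (x.1 = y.1 ∧ x.2 ≠ none ∧ y.2 = none) := by
  obtain ⟨u, a⟩ := x
  obtain ⟨v, b⟩ := y
  simp only [corona, SimpleGraph.fromRel_adj, ne_eq, Prod.mk.injEq, not_and]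
  rcases a with _ | w <;> rcases b with _ | w' <;>
    constructor <;> intro hh <;>
    simp_all [H.adj_comm, G.adj_comm] <;> first | tauto | aesop

end Char
section Corona
variable {V W : Type*} {G : SimpleGraph V} {H : SimpleGraph W}

lemma corona_adj_same {u : V} {a b : Option W} :
    (corona G H).Adj (u, a) (u, b) ↔ (joinK1 H).Adj a b := by
  simp only [corona, joinK1, SimpleGraph.fromRel_adj, ne_eq, Prod.mk.injEq, true_and]
  constructor
  · rintro ⟨hne, hr⟩
    refine ⟨fun hab => hne (by simp [hab]), ?_⟩
    rcases a with _ | a <;> rcases b with _ | b <;>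
      simp_all [G.irrefl, H.adj_comm] <;> tauto
  · rintro ⟨hne, hr⟩
    refine ⟨fun hab => hne hab, ?_⟩
    rcases a with _ | a <;> rcases b with _ | b <;>
      simp_all [G.irrefl, H.adj_comm] <;> tauto

end Corona

section Corona2
variable {V W : Type*} {G : SimpleGraph V} {H : SimpleGraph W}

lemma copy_orientation {D : V × Option W → V × Option W → Prop}
    (hD : IsOrientation (corona G H) D) (u : V) :
    IsOrientation (joinK1 H) (fun a b => D (u, a) (u, b)) :=
  ⟨fun a b hab => corona_adj_same.mp (hD.1 _ _ hab),
   fun a b hab => hD.2 _ _ (corona_adj_same.mpr hab)⟩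

lemma DOM_corona_le [Fintype V] [Fintype W] (G : SimpleGraph V) (H : SimpleGraph W) :
    DOM (corona G H) ≤ DOM (joinK1 H) * Fintype.card V := by
  classical
  apply DOM_le
  intro D hD
  have hcopy := copy_orientation hD
  choose S hScard hSdom using fun u => exists_domSet (fun a b => D (u, a) (u, b))
  set T : Finset (V × Option W) :=
    Finset.univ.biUnion (fun u => (S u).map ⟨fun a => (u, a), fun a b hab => (Prod.mk.injEq ..).mp hab |>.2⟩) with hT
  have hTdom : IsDomSet D T := by
    rintro ⟨u, a⟩ hx
    have ha : a ∉ S u := by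
      intro ha
      exact hx (Finset.mem_biUnion.mpr ⟨u, Finset.mem_univ u, Finset.mem_map.mpr ⟨a, ha, rfl⟩⟩)
    obtain ⟨b, hb, hba⟩ := hSdom u a ha
    exact ⟨(u, b), Finset.mem_biUnion.mpr ⟨u, Finset.mem_univ u, Finset.mem_map.mpr ⟨b, hb, rfl⟩⟩, hba⟩
  calc domNum D ≤ T.card := domNum_le hTdom
    _ ≤ ∑ u : V, ((S u).map ⟨fun a => (u, a), fun a b hab => (Prod.mk.injEq ..).mp hab |>.2⟩).card :=
        Finset.card_biUnion_le
    _ ≤ ∑ _u : V, DOM (joinK1 H) := by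
        apply Finset.sum_le_sum
        intro u _
        rw [Finset.card_map, hScard u]
        exact domNum_le_DOM (hcopy u)
    _ = DOM (joinK1 H) * Fintype.card V := by
        simp [mul_comm]

end Corona2

section Lower
variable {V W : Type*} {G : SimpleGraph V} {H : SimpleGraph W}

/-- The orientation of the corona used for the lower bound: within each copy, orient the
`H`-edges by `DH` and all edges from the copy of `H` towards the apex; orient `G`-edges by a
well-ordering. -/
def lowOrient (G : SimpleGraph V) (DH : W → W → Prop) (x y : V × Option W) : Prop :=
  (x.1 = y.1 ∧ ((∃ w w', x.2 = some w ∧ y.2 = some w' ∧ DH w w') ∨ (x.2 ≠ none ∧ y.2 = none)))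
  ∨ (x.1 ≠ y.1 ∧ x.2 = none ∧ y.2 = none ∧ G.Adj x.1 y.1 ∧ WellOrderingRel x.1 y.1)

lemma lowOrient_isOrientation {DH : W → W → Prop} (hDH : IsOrientation H DH) :
    IsOrientation (corona G H) (lowOrient G DH) := by
  constructor
  · rintro ⟨u, a⟩ ⟨v, b⟩ hab
    rw [corona_adj]
    rcases hab with ⟨huv, ⟨w, w', hw, hw', hD⟩ | ⟨ha, hb⟩⟩ | ⟨huv, ha, hb, hadj, _⟩
    · exact Or.inr (Or.inl ⟨huv, w, w', hw, hw', hDH.1 _ _ hD⟩)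
    · exact Or.inr (Or.inr (Or.inr ⟨huv, ha, hb⟩))
    · exact Or.inl ⟨huv, ha, hb, hadj⟩
  · rintro ⟨u, a⟩ ⟨v, b⟩ hab
    rw [corona_adj] at hab
    rcases hab with ⟨huv, ha, hb, hadj⟩ | ⟨huv, w, w', ha, hb, hadj⟩ |
        ⟨huv, ha, hb⟩ | ⟨huv, ha, hb⟩
    all_goals simp only at huv ha hb ⊢
    · -- apex-apex edge of G
      subst ha hb
      simp only [lowOrient, ne_eq, reduceCtorEq, not_true_eq_false, false_and, and_false,
        false_or, or_false, not_false_eq_true, true_and, and_true, exists_false,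
        Option.some.injEq] at *
      simp only [huv, Ne.symm huv, hadj, hadj.symm, not_false_eq_true, true_and]
      rcases trichotomous_of WellOrderingRel u v with h1 | h1 | h1
      · simp [h1, asymm h1]
      · exact absurd h1 huv
      · simp [h1, asymm h1]
    · -- H-edge within a copy
      subst huv ha hb
      have hiff := hDH.2 _ _ hadj
      constructor
      · rintro (⟨_, ⟨w0, w0', h1, h2, h3⟩ | ⟨h1, h2⟩⟩ | ⟨h1, _⟩)
        · simp only [Option.some.injEq] at h1 h2
          subst h1 h2
          rintro (⟨_, ⟨w0, w0', h1, h2, h4⟩ | ⟨h1, h2⟩⟩ | ⟨h1, _⟩)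
          · simp only [Option.some.injEq] at h1 h2
            subst h1 h2
            exact (hiff.mp h3) h4
          · exact absurd h2 (by simp)
          · exact absurd rfl h1
        · exact absurd h2 (by simp)
        · exact absurd rfl h1
      · intro hnot
        have hD : DH w w' := by
          rw [hiff]
          intro hD'
          exact hnot (Or.inl ⟨rfl, Or.inl ⟨w', w, rfl, rfl, hD'⟩⟩)
        exact Or.inl ⟨rfl, Or.inl ⟨w, w', rfl, rfl, hD⟩⟩
    · -- apex to leaf
      subst huv ha
      constructor
      · rintro (⟨_, ⟨w0, w0', h1, h2, h3⟩ | ⟨h1, h2⟩⟩ | ⟨h1, _⟩)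
        · exact absurd h1 (by simp)
        · exact absurd rfl h1
        · exact absurd rfl h1
      · intro hnot
        exact (hnot (Or.inl ⟨rfl, Or.inr ⟨hb, rfl⟩⟩)).elim
    · -- leaf to apex
      subst huv hb
      constructor
      · rintro (⟨_, h⟩ | ⟨h1, _⟩)
        · rintro (⟨_, ⟨w0, w0', h1, h2, h3⟩ | ⟨h1, h2⟩⟩ | ⟨h1, _⟩)
          · exact absurd h1 (by simp)
          · exact absurd rfl h1
          · exact absurd rfl h1
        · exact absurd rfl h1
      · intro _
        exact Or.inl ⟨rfl, Or.inr ⟨ha, rfl⟩⟩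

end Lower

section Main
variable {V W : Type*} {G : SimpleGraph V} {H : SimpleGraph W}

lemma lowOrient_domNum_ge [Fintype V] [Fintype W] {DH : W → W → Prop}
    (hDH : IsOrientation H DH) :
    domNum DH * Fintype.card V ≤ domNum (lowOrient G DH) := by
  classical
  obtain ⟨S, hScard, hSdom⟩ := exists_domSet (lowOrient G DH)
  rw [← hScard]
  set T : V → Finset W := fun u => Finset.univ.filter (fun w => (u, some w) ∈ S) with hT
  have hTdom : ∀ u, IsDomSet DH (T u) := by
    intro u w hw
    have hmem : (u, some w) ∉ S := by
      intro hmem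
      exact hw (Finset.mem_filter.mpr ⟨Finset.mem_univ w, hmem⟩)
    obtain ⟨x, hxS, hxD⟩ := hSdom _ hmem
    rcases hxD with ⟨hx1, ⟨w0, w0', h1, h2, h3⟩ | ⟨_, h2⟩⟩ | ⟨_, _, h2, _⟩
    · obtain ⟨u', a⟩ := x
      simp only at hx1 h1
      subst hx1 h1
      simp only [Option.some.injEq] at h2
      subst h2
      exact ⟨w0, Finset.mem_filter.mpr ⟨Finset.mem_univ _, hxS⟩, h3⟩
    · exact absurd h2 (by simp)
    · exact absurd h2 (by simp)
  set B : Finset (V × Option W) :=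
    Finset.univ.biUnion (fun u => (T u).map ⟨fun w => (u, some w), fun a b hab => by
      simpa using hab⟩) with hB
  have hBsub : B ⊆ S := by
    intro x hx
    simp only [hB, Finset.mem_biUnion, Finset.mem_map, Function.Embedding.coeFn_mk] at hx
    obtain ⟨u, _, w, hw, rfl⟩ := hx
    exact (Finset.mem_filter.mp hw).2
  have hBcard : B.card = ∑ u : V, (T u).card := by
    rw [hB, Finset.card_biUnion]
    · simp
    · intro u _ v _ huv
      simp only [Finset.disjoint_left, Finset.mem_map, Function.Embedding.coeFn_mk]
      rintro x ⟨w, _, rfl⟩ ⟨w', _, hx⟩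
      have : v = u := congrArg Prod.fst hx
      exact huv this.symm
  calc domNum DH * Fintype.card V = ∑ _u : V, domNum DH := by simp [mul_comm]
    _ ≤ ∑ u : V, (T u).card := Finset.sum_le_sum (fun u _ => domNum_le (hTdom u))
    _ = B.card := hBcard.symm
    _ ≤ S.card := Finset.card_le_card hBsub

end Main

theorem stmt8 {V W : Type*} [Fintype V] [Fintype W]
    (G : SimpleGraph V) (H : SimpleGraph W)
    (h : DOM (joinK1 H) = DOM H) :
    DOM (corona G H) = DOM H * Fintype.card V := by
  apply le_antisymm
  · calc DOM (corona G H) ≤ DOM (joinK1 H) * Fintype.card V := DOM_corona_le G H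
      _ = DOM H * Fintype.card V := by rw [h]
  · obtain ⟨DH, hDH, hDHnum⟩ := exists_DOM_orientation H
    calc DOM H * Fintype.card V = domNum DH * Fintype.card V := by rw [hDHnum]
      _ ≤ domNum (lowOrient G DH) := lowOrient_domNum_ge hDH
      _ ≤ DOM (corona G H) := domNum_le_DOM (lowOrient_isOrientation hDH)
end
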